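/- Let g be a finite-dimensional real Lie algebra endowed with a norm, let τ be an involutive Lie algebra automorphism of g, let h ∈ g^τ, and let W ⊆ g be a pointed generating invariant closed convex cone. Then g_red(W,τ,h) := g_−(W,τ,h) + h_0(h) + g_+(W,τ,h) is a 3-graded Lie subalgebra of g; more precisely: (i) g_+(W,τ,h) and g_−(W,τ,h) are abelian, i.e. ⁅u,v⁆ = 0 for u, v ∈ g_+ and for u, v ∈ g_−; (ii) ⁅g_−(W,τ,h), g_+(W,τ,h)⁆ ⊆ h_0(h); and (iii) ⁅h_0(h), g_±(W,τ,h)⁆ ⊆ g_±(W,τ,h). -/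

import Mathlib

open scoped Pointwise

/-- The bilinear map `B` is a Lie bracket on `g`. -/
def IsLieBracketOn {g : Type*} [AddCommGroup g] [Module ℝ g]
    (B : g →ₗ[ℝ] g →ₗ[ℝ] g) : Prop :=
  (∀ x : g, B x x = 0) ∧
    ∀ x y z : g, B x (B y z) = B (B x y) z + B y (B x z)

/-- `W` is an invariant closed convex cone of the (normed) Lie algebra `(g, B)`:
it is closed, convex, stable under nonnegative scalar multiplication, and invariant
under all operators `e^{ad x} = exp (B x)`. -/
def IsInvariantCone {g : Type*} [NormedAddCommGroup g] [NormedSpace ℝ g]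
    [FiniteDimensional ℝ g] (B : g →ₗ[ℝ] g →ₗ[ℝ] g) (W : Set g) : Prop :=
  IsClosed W ∧ Convex ℝ W ∧ (∀ c : ℝ, 0 ≤ c → ∀ w ∈ W, c • w ∈ W) ∧
    ∀ x : g, ∀ w ∈ W,
      NormedSpace.exp (LinearMap.toContinuousLinearMap (B x)) w ∈ W

/-- `q_{ε}(h) = {x ∈ q : ⁅h,x⁆ = ε x}` for the `(-1)`-eigenspace `q` of `τ`. -/
def qEigen {g : Type*} [NormedAddCommGroup g] [NormedSpace ℝ g] [FiniteDimensional ℝ g]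
    (B : g →ₗ[ℝ] g →ₗ[ℝ] g) (τ : g →ₗ[ℝ] g) (h : g) (ε : ℝ) : Set g :=
  {x : g | τ x = -x ∧ B h x = ε • x}

/-- `C₊(W,τ,h) = W ∩ q₁(h)`. -/
def conePlus {g : Type*} [NormedAddCommGroup g] [NormedSpace ℝ g] [FiniteDimensional ℝ g]
    (B : g →ₗ[ℝ] g →ₗ[ℝ] g) (τ : g →ₗ[ℝ] g) (h : g) (W : Set g) : Set g :=
  W ∩ qEigen B τ h 1

/-- `C₋(W,τ,h) = (−W) ∩ q₋₁(h)`. -/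
def coneMinus {g : Type*} [NormedAddCommGroup g] [NormedSpace ℝ g] [FiniteDimensional ℝ g]
    (B : g →ₗ[ℝ] g →ₗ[ℝ] g) (τ : g →ₗ[ℝ] g) (h : g) (W : Set g) : Set g :=
  (-W) ∩ qEigen B τ h (-1)

/-- `g₊(W,τ,h)`, the linear span of `C₊(W,τ,h)`. -/
def gPlus {g : Type*} [NormedAddCommGroup g] [NormedSpace ℝ g] [FiniteDimensional ℝ g]
    (B : g →ₗ[ℝ] g →ₗ[ℝ] g) (τ : g →ₗ[ℝ] g) (h : g) (W : Set g) : Submodule ℝ g :=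
  Submodule.span ℝ (conePlus B τ h W)

/-- `g₋(W,τ,h)`, the linear span of `C₋(W,τ,h)`. -/
def gMinus {g : Type*} [NormedAddCommGroup g] [NormedSpace ℝ g] [FiniteDimensional ℝ g]
    (B : g →ₗ[ℝ] g →ₗ[ℝ] g) (τ : g →ₗ[ℝ] g) (h : g) (W : Set g) : Submodule ℝ g :=
  Submodule.span ℝ (coneMinus B τ h W)

/-- `h₀(h) = {x ∈ g^τ : ⁅h,x⁆ = 0}`. -/
def hZero {g : Type*} [NormedAddCommGroup g] [NormedSpace ℝ g] [FiniteDimensional ℝ g]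
    (B : g →ₗ[ℝ] g →ₗ[ℝ] g) (τ : g →ₗ[ℝ] g) (h : g) : Set g :=
  {x : g | τ x = x ∧ B h x = 0}

set_option linter.unusedSectionVars false
set_option synthInstance.maxHeartbeats 1000000
set_option maxHeartbeats 1000000

section Aux

variable {g : Type*} [NormedAddCommGroup g] [NormedSpace ℝ g] [FiniteDimensional ℝ g]
variable (B : g →ₗ[ℝ] g →ₗ[ℝ] g)

/-- Antisymmetry of the bracket. -/
lemma IsLieBracketOn.skew (hB : IsLieBracketOn B) (x y : g) : B x y = - B y x := by
  have h := hB.1 (x + y)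
  simp only [map_add, LinearMap.add_apply, hB.1, zero_add, add_zero] at h
  exact eq_neg_of_add_eq_zero_right h

/-- Brackets of `ad h`-eigenvectors are eigenvectors for the sum of eigenvalues. -/
lemma eig_bracket (hB : IsLieBracketOn B) {h a b : g} {α β : ℝ}
    (ha : B h a = α • a) (hb : B h b = β • b) :
    B h (B a b) = (α + β) • B a b := by
  rw [hB.2 h a b, ha, hb]
  simp only [map_smul, LinearMap.map_smul₂, LinearMap.smul_apply]
  rw [add_smul]

/-- Iterated `ad u` of an eigenvector is an eigenvector. -/
lemma eig_pow (hB : IsLieBracketOn B) {h u z : g} {c a : ℝ}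
    (hu : B h u = c • u) (hz : B h z = a • z) :
    ∀ k : ℕ, B h (((B u) ^ k) z) = (a + k * c) • ((B u) ^ k) z := by
  intro k
  induction k with
  | zero => simpa using hz
  | succ k ih =>
      have hs : ((B u) ^ (k + 1)) z = B u (((B u) ^ k) z) := by
        rw [pow_succ', Module.End.mul_apply]
      rw [hs, eig_bracket B hB hu ih, ← hs]
      congr 1
      push_cast
      ring

/-- Iterated brackets `(ad u)^k z` vanish for `k ≥ dim g`, by linear independence of
eigenvectors with distinct eigenvalues. -/
lemma pow_vanish (hB : IsLieBracketOn B) {h u z : g} {c a : ℝ} (hc : c ≠ 0)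
    (hu : B h u = c • u) (hz : B h z = a • z) :
    ∀ k : ℕ, Module.finrank ℝ g ≤ k → ((B u) ^ k) z = 0 := by
  set n := Module.finrank ℝ g with hn
  have key : ((B u) ^ n) z = 0 := by
    by_contra hne
    have hall : ∀ j : ℕ, j ≤ n → ((B u) ^ j) z ≠ 0 := by
      intro j hj h0
      apply hne
      have hsplit : ((B u) ^ n) z = ((B u) ^ (n - j)) (((B u) ^ j) z) := by
        rw [← Module.End.mul_apply, ← pow_add, Nat.sub_add_cancel hj]
      rw [hsplit, h0, map_zero]
    have li : LinearIndependent ℝ (fun j : Fin (n + 1) => ((B u) ^ (j : ℕ)) z) := by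
      apply Module.End.eigenvectors_linearIndependent' (B h)
        (fun j : Fin (n + 1) => a + (j : ℕ) * c)
      · intro i j hij
        simp only at hij
        have h1 : ((i : ℕ) : ℝ) * c = ((j : ℕ) : ℝ) * c := by linarith
        have h2 : ((i : ℕ) : ℝ) = ((j : ℕ) : ℝ) := mul_right_cancel₀ hc h1
        exact Fin.ext (Nat.cast_injective h2)
      · intro j
        refine ⟨Module.End.mem_eigenspace_iff.2 ?_, hall (j : ℕ) (by omega)⟩
        exact eig_pow B hB hu hz (j : ℕ)
    have hcard := li.fintype_card_le_finrank
    rw [Fintype.card_fin, ← hn] at hcard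
    omega
  intro k hk
  have hsplit : ((B u) ^ k) z = ((B u) ^ (k - n)) (((B u) ^ n) z) := by
    rw [← Module.End.mul_apply, ← pow_add, Nat.sub_add_cancel hk]
  rw [hsplit, key, map_zero]

lemma toCLM_pow_apply (u : g) : ∀ (k : ℕ) (w : g),
    ((LinearMap.toContinuousLinearMap (B u)) ^ k) w = ((B u) ^ k) w := by
  intro k
  induction k with
  | zero => intro w; rfl
  | succ k ih =>
      intro w
      rw [pow_succ', pow_succ', ContinuousLinearMap.mul_apply, Module.End.mul_apply, ← ih]
      rfl

/-- The exponential of `t • ad u` applied to a vector on which `ad u` is nilpotent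
is a finite sum. -/
lemma exp_apply_eq_sum (u w : g) (m : ℕ) (t : ℝ)
    (hm : ∀ k : ℕ, m ≤ k → ((B u) ^ k) w = 0) :
    NormedSpace.exp (LinearMap.toContinuousLinearMap (B (t • u))) w
      = ∑ k ∈ Finset.range m, (t ^ k * ((k.factorial : ℝ))⁻¹) • ((B u) ^ k) w := by
  set A := LinearMap.toContinuousLinearMap (B u) with hA
  have hsm : LinearMap.toContinuousLinearMap (B (t • u)) = t • A := by
    rw [map_smul, map_smul]
  rw [hsm, NormedSpace.exp_eq_tsum (𝕂 := ℝ)]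
  have hs : Summable fun n : ℕ => ((n.factorial : ℝ))⁻¹ • (t • A) ^ n :=
    NormedSpace.expSeries_summable' (𝕂 := ℝ) (t • A)
  show ((∑' (n : ℕ), ((n.factorial : ℝ))⁻¹ • (t • A) ^ n)) w = _
  rw [show ((∑' (n : ℕ), ((n.factorial : ℝ))⁻¹ • (t • A) ^ n)) w
      = ((ContinuousLinearMap.apply ℝ g w) (∑' (n : ℕ), ((n.factorial : ℝ))⁻¹ • (t • A) ^ n))
      from rfl,
    ((ContinuousLinearMap.apply ℝ g w).map_tsum hs)]
  have hterm : ∀ n : ℕ, (ContinuousLinearMap.apply ℝ g w) (((n.factorial : ℝ))⁻¹ • (t • A) ^ n)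
      = (t ^ n * ((n.factorial : ℝ))⁻¹) • ((B u) ^ n) w := by
    intro n
    have hp : ((t • A) ^ n) w = t ^ n • (A ^ n) w := by
      rw [smul_pow]; simp
    simp only [ContinuousLinearMap.apply_apply, ContinuousLinearMap.smul_apply]
    rw [hp, toCLM_pow_apply, smul_smul, mul_comm]
  rw [tsum_congr hterm]
  exact tsum_eq_sum (by
    intro k hk
    rw [hm k (by simpa using hk), smul_zero])

/-- Bipolar-type membership: a point nonnegative under all functionals that are
nonnegative on a closed convex cone belongs to the cone. -/
lemma mem_of_dual_nonneg {W : Set g} (hclosed : IsClosed W) (hconv : Convex ℝ W)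
    (hcone : ∀ c : ℝ, 0 ≤ c → ∀ w ∈ W, c • w ∈ W) (h0 : (0 : g) ∈ W) {z : g}
    (hz : ∀ μ : g →L[ℝ] ℝ, (∀ w ∈ W, 0 ≤ μ w) → 0 ≤ μ z) : z ∈ W := by
  by_contra hzW
  obtain ⟨f, u, hfW, hfz⟩ := geometric_hahn_banach_closed_point hconv hclosed hzW
  have hu : (0 : ℝ) < u := by simpa using hfW 0 h0
  have hneg : ∀ w ∈ W, f w ≤ 0 := by
    intro w hw
    by_contra hpos
    push_neg at hpos
    have hcpos : (0 : ℝ) ≤ u / f w + 1 := by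
      have := div_pos hu hpos
      linarith
    have hlt := hfW _ (hcone (u / f w + 1) hcpos w hw)
    rw [map_smul, smul_eq_mul, add_mul, div_mul_cancel₀ _ (ne_of_gt hpos), one_mul] at hlt
    linarith
  have h1 : 0 ≤ (-f) z := hz (-f) (by
    intro w hw
    simpa using hneg w hw)
  simp only [ContinuousLinearMap.neg_apply, neg_nonneg] at h1
  linarith [hfz]

/-- Key lemma: two elements of a pointed invariant cone that are `ad h`-eigenvectors
for the same nonzero eigenvalue commute. -/
lemma bracket_eq_zero_of_mem_cone (hB : IsLieBracketOn B) {W : Set g}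
    (hW : IsInvariantCone B W) (hpointed : W ∩ (-W) = {0}) {h : g} {c : ℝ} (hc : c ≠ 0)
    {x y : g} (hx : x ∈ W) (hy : y ∈ W) (hhx : B h x = c • x) (hhy : B h y = c • y) :
    B x y = 0 := by
  classical
  set z := B x y with hzdef
  set u := x + y with hudef
  have hhu : B h u = c • u := by rw [hudef, map_add, hhx, hhy, smul_add]
  have hhz : B h z = (2 * c) • z := by
    have h2 := eig_bracket B hB hhx hhy
    rw [← hzdef] at h2
    rw [h2]
    congr 1
    ring
  set n := Module.finrank ℝ g with hn
  have hvanish : ∀ k : ℕ, n ≤ k → ((B u) ^ k) z = 0 :=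
    pow_vanish B hB hc hhu hhz
  rcases Nat.eq_zero_or_pos n with hn0 | hnpos
  · have h0 := hvanish 0 (by omega)
    simpa using h0
  -- orbit identities
  have hux : B u x = - z := by
    rw [hudef, LinearMap.map_add₂, hB.1, zero_add, hB.skew B y x, hzdef]
  have huy : B u y = z := by
    rw [hudef, LinearMap.map_add₂, hB.1, add_zero, hzdef]
  have hpx : ∀ k : ℕ, ((B u) ^ (k + 1)) x = - (((B u) ^ k) z) := by
    intro k
    rw [pow_succ, Module.End.mul_apply, hux, map_neg]
  have hpy : ∀ k : ℕ, ((B u) ^ (k + 1)) y = ((B u) ^ k) z := by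
    intro k
    rw [pow_succ, Module.End.mul_apply, huy]
  -- the polynomial orbit bound
  set S : ℝ → g := fun t =>
    ∑ k ∈ Finset.range n, (t ^ (k + 1) * (((k + 1).factorial : ℝ))⁻¹) • ((B u) ^ k) z with hS
  have hxS : ∀ t : ℝ, x - S t ∈ W := by
    intro t
    have hmem := hW.2.2.2 (t • u) x hx
    rw [exp_apply_eq_sum B u x (n + 1) t (by
      intro k hk
      obtain ⟨j, rfl⟩ : ∃ j, k = j + 1 := ⟨k - 1, by omega⟩
      rw [hpx j, hvanish j (by omega), neg_zero])] at hmem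
    rw [Finset.sum_range_succ'] at hmem
    simp only [pow_zero, Nat.factorial_zero, Nat.cast_one, inv_one, one_mul, mul_one,
      one_smul, Module.End.one_apply] at hmem
    have hsum : (∑ k ∈ Finset.range n,
        (t ^ (k + 1) * (((k + 1).factorial : ℝ))⁻¹) • ((B u) ^ (k + 1)) x) = - S t := by
      rw [hS, ← Finset.sum_neg_distrib]
      refine Finset.sum_congr rfl fun k _ => ?_
      rw [hpx k, smul_neg]
    rw [hsum, neg_add_eq_sub] at hmem
    exact hmem
  have hyS : ∀ t : ℝ, y + S t ∈ W := by
    intro t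
    have hmem := hW.2.2.2 (t • u) y hy
    rw [exp_apply_eq_sum B u y (n + 1) t (by
      intro k hk
      obtain ⟨j, rfl⟩ : ∃ j, k = j + 1 := ⟨k - 1, by omega⟩
      rw [hpy j, hvanish j (by omega)])] at hmem
    rw [Finset.sum_range_succ'] at hmem
    simp only [pow_zero, Nat.factorial_zero, Nat.cast_one, inv_one, one_mul, mul_one,
      one_smul, Module.End.one_apply] at hmem
    have hsum : (∑ k ∈ Finset.range n,
        (t ^ (k + 1) * (((k + 1).factorial : ℝ))⁻¹) • ((B u) ^ (k + 1)) y) = S t := by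
      rw [hS]
      refine Finset.sum_congr rfl fun k _ => ?_
      rw [hpy k]
    rw [hsum, add_comm] at hmem
    exact hmem
  -- every cone functional kills z
  have hμz : ∀ μ : g →L[ℝ] ℝ, (∀ w ∈ W, 0 ≤ μ w) → μ z = 0 := by
    intro μ hμ
    set P : Polynomial ℝ := ∑ k ∈ Finset.range n,
      Polynomial.monomial (k + 1) ((((k + 1).factorial : ℝ))⁻¹ * μ (((B u) ^ k) z)) with hP
    have hPeval : ∀ t : ℝ, P.eval t = μ (S t) := by
      intro t
      rw [hP, hS, Polynomial.eval_finset_sum, map_sum]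
      refine Finset.sum_congr rfl fun k _ => ?_
      rw [Polynomial.eval_monomial, map_smul]
      simp only [smul_eq_mul]
      ring
    have hbound : ∀ t : ℝ, |P.eval t| ≤ max (μ x) (μ y) := by
      intro t
      rw [hPeval t, abs_le]
      have h1 := hμ _ (hxS t)
      have h2 := hμ _ (hyS t)
      rw [map_sub] at h1
      rw [map_add] at h2
      constructor
      · have := le_max_right (μ x) (μ y)
        linarith
      · have := le_max_left (μ x) (μ y)
        linarith
    have hdeg : P.degree ≤ 0 := by
      rw [← Polynomial.abs_isBoundedUnder_iff]
      exact ⟨max (μ x) (μ y), Filter.eventually_map.2 (Filter.Eventually.of_forall hbound)⟩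
    have hco : P.coeff 1 = 0 :=
      Polynomial.coeff_eq_zero_of_degree_lt (lt_of_le_of_lt hdeg (by norm_num))
    have hco1 : P.coeff 1 = μ z := by
      rw [hP, Polynomial.finset_sum_coeff]
      rw [Finset.sum_eq_single 0]
      · simp [Polynomial.coeff_monomial]
      · intro b _ hb
        rw [Polynomial.coeff_monomial, if_neg (by omega)]
      · intro habs
        exact absurd (Finset.mem_range.2 hnpos) habs
    exact hco1.symm.trans hco
  have h0W : (0 : g) ∈ W := by
    have h00 : (0 : g) ∈ W ∩ (-W) := by rw [hpointed]; rfl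
    exact h00.1
  have hzW : z ∈ W :=
    mem_of_dual_nonneg hW.1 hW.2.1 hW.2.2.1 h0W
      (fun μ hμ => le_of_eq (hμz μ hμ).symm)
  have hznW : z ∈ -W := by
    rw [Set.mem_neg]
    refine mem_of_dual_nonneg hW.1 hW.2.1 hW.2.2.1 h0W (fun μ hμ => ?_)
    rw [map_neg, (hμz μ hμ), neg_zero]
  have hmem : z ∈ W ∩ (-W) := ⟨hzW, hznW⟩
  rw [hpointed] at hmem
  exact hmem

/-- The negative of an invariant cone is an invariant cone. -/
lemma IsInvariantCone.neg {W : Set g} (hW : IsInvariantCone B W) :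
    IsInvariantCone B (-W) := by
  obtain ⟨hc, hv, hs, he⟩ := hW
  refine ⟨hc.neg, hv.neg, ?_, ?_⟩
  · intro c hc0 w hw
    rw [Set.mem_neg] at hw ⊢
    rw [← smul_neg]
    exact hs c hc0 _ hw
  · intro x w hw
    rw [Set.mem_neg] at hw ⊢
    rw [← map_neg (NormedSpace.exp (LinearMap.toContinuousLinearMap (B x)))]
    exact he x _ hw

/-- Flowing an element of `W' ∩ q_ε(h)` by `exp (t ad z)` for `z ∈ h₀` stays in the set;
hence the bracket `[z, u]`, a derivative of such a flow, lies in its span. -/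
lemma bracket_mem_span_cone (hB : IsLieBracketOn B) (τ : g →ₗ[ℝ] g)
    (hτbr : ∀ x y : g, τ (B x y) = B (τ x) (τ y)) {h : g} {W' : Set g}
    (hW' : IsInvariantCone B W') (ε : ℝ) {z u : g} (hz1 : τ z = z) (hz2 : B h z = 0)
    (hu : u ∈ W' ∩ qEigen B τ h ε) :
    B z u ∈ Submodule.span ℝ (W' ∩ qEigen B τ h ε) := by
  classical
  set C : Set g := W' ∩ qEigen B τ h ε with hC
  set A : g →L[ℝ] g := LinearMap.toContinuousLinearMap (B z) with hA
  set φ : ℝ → g := fun t => NormedSpace.exp (t • A) u with hφ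
  have hsm : ∀ t : ℝ, LinearMap.toContinuousLinearMap (B (t • z)) = t • A := by
    intro t; rw [map_smul, map_smul]
  set T : g →L[ℝ] g := LinearMap.toContinuousLinearMap τ with hT
  set H : g →L[ℝ] g := LinearMap.toContinuousLinearMap (B h) with hH
  have hAT : Commute A T := by
    refine ContinuousLinearMap.ext fun w => ?_
    show A (T w) = T (A w)
    show B z (τ w) = τ (B z w)
    rw [hτbr z w, hz1]
  have hAH : Commute A H := by
    refine ContinuousLinearMap.ext fun w => ?_
    show A (H w) = H (A w)
    show B z (B h w) = B h (B z w)
    rw [hB.2 h z w, hz2]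
    simp
  have hφC : ∀ t : ℝ, φ t ∈ C := by
    intro t
    refine ⟨?_, ?_, ?_⟩
    · have hm := hW'.2.2.2 (t • z) u hu.1
      rwa [hsm t] at hm
    · have hcomm : Commute (t • A) T := hAT.smul_left t
      have hTexp := (hcomm.exp_left).eq
      show τ (φ t) = - φ t
      have hTφ : τ (φ t) = T (φ t) := rfl
      rw [hTφ, hφ]
      show T (NormedSpace.exp (t • A) u) = _
      rw [← ContinuousLinearMap.mul_apply, ← hTexp, ContinuousLinearMap.mul_apply]
      rw [show T u = τ u from rfl, hu.2.1, map_neg]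
    · have hcomm : Commute (t • A) H := hAH.smul_left t
      have hHexp := (hcomm.exp_left).eq
      show B h (φ t) = ε • φ t
      have hHφ : B h (φ t) = H (φ t) := rfl
      rw [hHφ, hφ]
      show H (NormedSpace.exp (t • A) u) = _
      rw [← ContinuousLinearMap.mul_apply, ← hHexp, ContinuousLinearMap.mul_apply]
      rw [show H u = B h u from rfl, hu.2.2, map_smul]
  have hder : HasDerivAt φ (A u) 0 := by
    have h1 := hasDerivAt_exp_smul_const (𝕂 := ℝ) A (0 : ℝ)
    have h2 := h1.clm_apply (hasDerivAt_const (0 : ℝ) u)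
    simpa using h2
  have hslope := hasDerivAt_iff_tendsto_slope.1 hder
  have hφ0 : φ 0 = u := by
    rw [hφ]
    show NormedSpace.exp ((0 : ℝ) • A) u = u
    rw [zero_smul, NormedSpace.exp_zero, ContinuousLinearMap.one_apply]
  have hev : ∀ᶠ t in nhdsWithin (0 : ℝ) {(0 : ℝ)}ᶜ,
      slope φ 0 t ∈ Submodule.span ℝ C := by
    refine Filter.Eventually.of_forall fun t => ?_
    rw [slope_def_module]
    exact Submodule.smul_mem _ _ (Submodule.sub_mem _
      (Submodule.subset_span (hφC t)) (by rw [hφ0]; exact Submodule.subset_span hu))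
  have hclosed : IsClosed ((Submodule.span ℝ C : Submodule ℝ g) : Set g) :=
    Submodule.closed_of_finiteDimensional _
  have hfinal := hclosed.mem_of_tendsto hslope hev
  exact hfinal

end Aux

/-- Lemma 3.1: `g_red(W,τ,h) = g₋ ⊕ h₀(h) ⊕ g₊` is a 3-graded Lie subalgebra:
`g₊` and `g₋` are abelian, `⁅g₋, g₊⁆ ⊆ h₀(h)`, and `⁅h₀(h), g_±⁆ ⊆ g_±`. -/
theorem gRed_three_graded
    {g : Type*} [NormedAddCommGroup g] [NormedSpace ℝ g] [FiniteDimensional ℝ g]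
    (B : g →ₗ[ℝ] g →ₗ[ℝ] g) (hB : IsLieBracketOn B)
    (τ : g →ₗ[ℝ] g) (hτbr : ∀ x y : g, τ (B x y) = B (τ x) (τ y))
    (hτinv : ∀ x, τ (τ x) = x)
    (h : g) (hh : τ h = h)
    (W : Set g) (hW : IsInvariantCone B W)
    (hpointed : W ∩ (-W) = {0}) (hgen : Submodule.span ℝ W = ⊤) :
    (∀ u ∈ gPlus B τ h W, ∀ v ∈ gPlus B τ h W, B u v = 0) ∧
    (∀ u ∈ gMinus B τ h W, ∀ v ∈ gMinus B τ h W, B u v = 0) ∧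
    (∀ u ∈ gMinus B τ h W, ∀ v ∈ gPlus B τ h W, B u v ∈ hZero B τ h) ∧
    (∀ z ∈ hZero B τ h, ∀ u ∈ gPlus B τ h W, B z u ∈ gPlus B τ h W) ∧
    (∀ z ∈ hZero B τ h, ∀ u ∈ gMinus B τ h W, B z u ∈ gMinus B τ h W) := by
  classical
  -- (i) gPlus abelian
  have hgenP : ∀ x ∈ conePlus B τ h W, ∀ y ∈ conePlus B τ h W, B x y = 0 := by
    intro x hx y hy
    exact bracket_eq_zero_of_mem_cone B hB hW hpointed one_ne_zero hx.1 hy.1 hx.2.2 hy.2.2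
  have habP : ∀ x ∈ conePlus B τ h W, ∀ v ∈ gPlus B τ h W, B x v = 0 := by
    intro x hx v hv
    have hker : gPlus B τ h W ≤ LinearMap.ker (B x) := by
      rw [gPlus, Submodule.span_le]
      intro y hy
      rw [SetLike.mem_coe, LinearMap.mem_ker]
      exact hgenP x hx y hy
    exact LinearMap.mem_ker.1 (hker hv)
  have hplus : ∀ u ∈ gPlus B τ h W, ∀ v ∈ gPlus B τ h W, B u v = 0 := by
    intro u hu v hv
    have hker : gPlus B τ h W ≤ LinearMap.ker (B.flip v) := by
      rw [gPlus, Submodule.span_le]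
      intro x hx
      rw [SetLike.mem_coe, LinearMap.mem_ker, LinearMap.flip_apply]
      exact habP x hx v hv
    have := hker hu
    rw [LinearMap.mem_ker, LinearMap.flip_apply] at this
    exact this
  -- (ii) gMinus abelian
  have hWneg : IsInvariantCone B (-W) := hW.neg B
  have hpointedneg : (-W) ∩ (-(-W)) = {0} := by
    rw [neg_neg, Set.inter_comm]
    exact hpointed
  have hgenM : ∀ x ∈ coneMinus B τ h W, ∀ y ∈ coneMinus B τ h W, B x y = 0 := by
    intro x hx y hy
    exact bracket_eq_zero_of_mem_cone B hB hWneg hpointedneg (c := -1) (by norm_num)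
      hx.1 hy.1 hx.2.2 hy.2.2
  have habM : ∀ x ∈ coneMinus B τ h W, ∀ v ∈ gMinus B τ h W, B x v = 0 := by
    intro x hx v hv
    have hker : gMinus B τ h W ≤ LinearMap.ker (B x) := by
      rw [gMinus, Submodule.span_le]
      intro y hy
      rw [SetLike.mem_coe, LinearMap.mem_ker]
      exact hgenM x hx y hy
    exact LinearMap.mem_ker.1 (hker hv)
  have hminus : ∀ u ∈ gMinus B τ h W, ∀ v ∈ gMinus B τ h W, B u v = 0 := by
    intro u hu v hv
    have hker : gMinus B τ h W ≤ LinearMap.ker (B.flip v) := by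
      rw [gMinus, Submodule.span_le]
      intro x hx
      rw [SetLike.mem_coe, LinearMap.mem_ker, LinearMap.flip_apply]
      exact habM x hx v hv
    have := hker hu
    rw [LinearMap.mem_ker, LinearMap.flip_apply] at this
    exact this
  -- (iii) [gMinus, gPlus] ⊆ hZero
  set Hsub : Submodule ℝ g :=
    LinearMap.ker (τ - LinearMap.id) ⊓ LinearMap.ker (B h) with hHsub
  have hHmem : ∀ w : g, w ∈ Hsub ↔ (τ w = w ∧ B h w = 0) := by
    intro w
    rw [hHsub, Submodule.mem_inf, LinearMap.mem_ker, LinearMap.mem_ker,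
      LinearMap.sub_apply, LinearMap.id_apply, sub_eq_zero]
  have hcore : ∀ x ∈ coneMinus B τ h W, ∀ y ∈ conePlus B τ h W, B x y ∈ Hsub := by
    intro x hx y hy
    rw [hHmem]
    constructor
    · rw [hτbr, hx.2.1, hy.2.1]
      simp [LinearMap.map_neg₂]
    · rw [hB.2 h x y, hx.2.2, hy.2.2, map_smul]
      simp
  have hmix : ∀ u ∈ gMinus B τ h W, ∀ v ∈ gPlus B τ h W, B u v ∈ hZero B τ h := by
    intro u hu v hv
    have hstep1 : ∀ x ∈ coneMinus B τ h W, gPlus B τ h W ≤ Submodule.comap (B x) Hsub := by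
      intro x hx
      rw [gPlus, Submodule.span_le]
      intro y hy
      rw [SetLike.mem_coe, Submodule.mem_comap]
      exact hcore x hx y hy
    have hstep2 : gMinus B τ h W ≤ Submodule.comap (B.flip v) Hsub := by
      rw [gMinus, Submodule.span_le]
      intro x hx
      rw [SetLike.mem_coe, Submodule.mem_comap, LinearMap.flip_apply]
      exact hstep1 x hx hv
    have := hstep2 hu
    rw [Submodule.mem_comap, LinearMap.flip_apply, hHmem] at this
    exact this
  -- (iv) [hZero, gPlus] ⊆ gPlus
  have hzp : ∀ z ∈ hZero B τ h, ∀ u ∈ gPlus B τ h W, B z u ∈ gPlus B τ h W := by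
    intro z hz u hu
    have hstep : gPlus B τ h W ≤ Submodule.comap (B z) (gPlus B τ h W) := by
      rw [gPlus, Submodule.span_le]
      intro x hx
      rw [SetLike.mem_coe, Submodule.mem_comap]
      exact bracket_mem_span_cone B hB τ hτbr hW 1 hz.1 hz.2 hx
    have := hstep hu
    rw [Submodule.mem_comap] at this
    exact this
  -- (v) [hZero, gMinus] ⊆ gMinus
  have hzm : ∀ z ∈ hZero B τ h, ∀ u ∈ gMinus B τ h W, B z u ∈ gMinus B τ h W := by
    intro z hz u hu
    have hstep : gMinus B τ h W ≤ Submodule.comap (B z) (gMinus B τ h W) := by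
      rw [gMinus, Submodule.span_le]
      intro x hx
      rw [SetLike.mem_coe, Submodule.mem_comap]
      exact bracket_mem_span_cone B hB τ hτbr (hW.neg B) (-1) hz.1 hz.2 hx
    have := hstep hu
    rw [Submodule.mem_comap] at this
    exact this
  exact ⟨hplus, hminus, hmix, hzp, hzm⟩
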